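/- arXiv:1002.3601 — 4 statements merged into one kernel-verified Lean document; each statement's English description precedes it below -/
import Mathlib

section
/- Define f_d(i,0,x) := ∑_{k=0}^{d-1} C_{d-1-k}·binom(d+i-1-k,k)·(1-x)^k·x^{d-k} for natural numbers d ≥ 1 and i ≥ 0, where C_n is the n-th Catalan number. Then for all i ≥ 1, these polynomials satisfy the recursion f_d(i,0,x) = f_d(i-1,0,x) - (x-1)·f_{d-1}(i-1,0,x) (for d ≥ 2). -/
open Polynomial Finset

/-- `f_d(i,0,x) = ∑_{k=0}^{d-1} C_{d-1-k}·binom(d+i-1-k,k)·(1-x)^k·x^{d-k}`. -/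
noncomputable def fdi0 (d i : ℕ) : Polynomial ℤ :=
  ∑ k ∈ Finset.range d,
    C ((catalan (d - 1 - k) * (d + i - 1 - k).choose k : ℕ) : ℤ) * (1 - X) ^ k * X ^ (d - k)

/-- The recursion `f_d(i,0,x) = f_d(i-1,0,x) - (x-1)·f_{d-1}(i-1,0,x)`. -/
theorem stmt2 (d i : ℕ) (hd : 2 ≤ d) (hi : 1 ≤ i) :
    fdi0 d i = fdi0 d (i - 1) - (X - 1) * fdi0 (d - 1) (i - 1) := by
  obtain ⟨e, rfl⟩ : ∃ e, d = e + 2 := ⟨d - 2, by omega⟩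
  obtain ⟨j, rfl⟩ : ∃ j, i = j + 1 := ⟨i - 1, by omega⟩
  have key : fdi0 (e + 2) (j + 1) - fdi0 (e + 2) j = (1 - X) * fdi0 (e + 1) j := by
    unfold fdi0
    rw [← Finset.sum_sub_distrib, Finset.mul_sum, Finset.sum_range_succ']
    simp only [Nat.sub_zero, pow_zero, mul_one, Nat.choose_zero_right, sub_self, add_zero]
    refine Finset.sum_congr rfl fun m hm => ?_
    rw [Finset.mem_range] at hm
    have h1 : e + 2 - 1 - (m + 1) = e - m := by omega
    have h2 : e + 2 + (j + 1) - 1 - (m + 1) = (e + j - m) + 1 := by omega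
    have h3 : e + 2 + j - 1 - (m + 1) = e + j - m := by omega
    have h4 : e + 2 - (m + 1) = (e + 1 - m) := by omega
    have h5 : e + 1 - 1 - m = e - m := by omega
    have h6 : e + 1 + j - 1 - m = e + j - m := by omega
    rw [h1, h2, h3, h4, h5, h6, Nat.choose_succ_succ]
    simp only [Nat.succ_eq_add_one]
    push_cast
    simp only [map_add, map_mul]
    ring
  have he : e + 2 - 1 = e + 1 := by omega
  rw [he, Nat.add_sub_cancel]
  linear_combination key
end

section
/- Define f_d(i,j,x) := ∑_{k=0}^{d-1} C_{d-1-k}·(1-x)^k·x^{d-k}·∑_{s=0}^{j} binom(j,s)·binom(d+i+j-1-k-s,k-s) for natural numbers d ≥ 1, i, j ≥ 0, where C_n is the n-th Catalan number and binom(a,b)=0 when b is negative or b > a. Then for all j ≥ 1 and d ≥ 2, these polynomials satisfy the recursion f_d(i,j,x) = f_d(i,j-1,x) - 2(x-1)·f_{d-1}(i,j-1,x). -/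
open Polynomial Finset

/-- Inner sum `∑_{s=0}^{j} binom(j,s)·binom(d+i+j-1-k-s,k-s)`, where binomial
coefficients with negative lower index are interpreted as zero. -/
def innerSum (d i j k : ℕ) : ℕ :=
  ∑ s ∈ Finset.range (j + 1),
    j.choose s * (if s ≤ k then (d + i + j - 1 - k - s).choose (k - s) else 0)

/-- `f_d(i,j,x) = ∑_{k=0}^{d-1} C_{d-1-k}·(1-x)^k·x^{d-k}·innerSum`. -/
noncomputable def fdij (d i j : ℕ) : Polynomial ℤ :=
  ∑ k ∈ Finset.range d,
    C ((catalan (d - 1 - k) * innerSum d i j k : ℕ) : ℤ) * (1 - X) ^ k * X ^ (d - k)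

lemma innerSum_zero (d i j : ℕ) : innerSum d i j 0 = 1 := by
  unfold innerSum
  rw [Finset.sum_range_succ']
  simp

lemma pascal_sum (J : ℕ) (f : ℕ → ℕ) :
    ∑ s ∈ Finset.range (J + 2), (J + 1).choose s * f s
      = ∑ s ∈ Finset.range (J + 1), J.choose s * (f s + f (s + 1)) := by
  have h0 : ∑ s ∈ Finset.range (J + 2), (J + 1).choose s * f s
      = ∑ s ∈ Finset.range (J + 1), (J + 1).choose (s + 1) * f (s + 1)
        + (J + 1).choose 0 * f 0 := Finset.sum_range_succ' _ _
  have h1 : ∑ s ∈ Finset.range (J + 2), J.choose s * f s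
      = ∑ s ∈ Finset.range (J + 1), J.choose (s + 1) * f (s + 1)
        + J.choose 0 * f 0 := Finset.sum_range_succ' _ _
  have h2 : ∑ s ∈ Finset.range (J + 2), J.choose s * f s
      = ∑ s ∈ Finset.range (J + 1), J.choose s * f s := by
    rw [Finset.sum_range_succ, Nat.choose_succ_self, zero_mul, add_zero]
  have h3 : ∑ s ∈ Finset.range (J + 1), (J + 1).choose (s + 1) * f (s + 1)
      = ∑ s ∈ Finset.range (J + 1), J.choose s * f (s + 1)
        + ∑ s ∈ Finset.range (J + 1), J.choose (s + 1) * f (s + 1) := by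
    rw [← Finset.sum_add_distrib]
    refine Finset.sum_congr rfl fun s _ => ?_
    rw [Nat.choose_succ_succ, add_mul]
  have h4 : ∑ s ∈ Finset.range (J + 1), J.choose s * (f s + f (s + 1))
      = ∑ s ∈ Finset.range (J + 1), J.choose s * f s
        + ∑ s ∈ Finset.range (J + 1), J.choose s * f (s + 1) := by
    rw [← Finset.sum_add_distrib]
    exact Finset.sum_congr rfl fun s _ => mul_add _ _ _
  simp only [Nat.choose_zero_right, one_mul] at h0 h1
  omega

lemma key (d i J K : ℕ) (hd : K + 2 ≤ d) :
    innerSum d i (J + 1) (K + 1)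
      = innerSum d i J (K + 1) + 2 * innerSum (d - 1) i J K := by
  unfold innerSum
  rw [show J + 1 + 1 = J + 2 from rfl,
    pascal_sum J (fun s => if s ≤ K + 1 then
      (d + i + (J + 1) - 1 - (K + 1) - s).choose (K + 1 - s) else 0)]
  rw [Finset.mul_sum, ← Finset.sum_add_distrib]
  refine Finset.sum_congr rfl fun s hs => ?_
  simp only [Finset.mem_range] at hs
  have hsJ : s ≤ J := Nat.lt_succ_iff.mp hs
  rcases le_or_gt s K with h | h
  · have g1 : s ≤ K + 1 := by omega
    have g2 : s + 1 ≤ K + 1 := by omega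
    have e1 : d + i + (J + 1) - 1 - (K + 1) - s
        = (d + i + J - 1 - (K + 1) - s) + 1 := by omega
    have e2 : d + i + (J + 1) - 1 - (K + 1) - (s + 1)
        = d - 1 + i + J - 1 - K - s := by omega
    have e3 : K + 1 - s = (K - s) + 1 := by omega
    have e4 : K + 1 - (s + 1) = K - s := by omega
    have e5 : d + i + J - 1 - (K + 1) - s = d - 1 + i + J - 1 - K - s := by omega
    simp only [if_pos g1, if_pos g2, if_pos h, e1, e2, e3, e4, e5,
      Nat.choose_succ_succ]
    ring
  · rcases eq_or_lt_of_le (Nat.succ_le_of_lt h) with h' | h'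
    · have g1 : s ≤ K + 1 := by omega
      have g2 : ¬ (s + 1 ≤ K + 1) := by omega
      have g3 : ¬ (s ≤ K) := by omega
      have e3 : K + 1 - s = 0 := by omega
      simp only [if_pos g1, if_neg g2, if_neg g3, e3, Nat.choose_zero_right]
      ring
    · have g1 : ¬ (s ≤ K + 1) := by omega
      have g2 : ¬ (s + 1 ≤ K + 1) := by omega
      have g3 : ¬ (s ≤ K) := by omega
      simp only [if_neg g1, if_neg g2, if_neg g3]
      ring

/-- The recursion `f_d(i,j,x) = f_d(i,j-1,x) - 2(x-1)·f_{d-1}(i,j-1,x)`. -/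
theorem stmt3 (d i j : ℕ) (hd : 2 ≤ d) (hj : 1 ≤ j) :
    fdij d i j = fdij d i (j - 1) - 2 * (X - 1) * fdij (d - 1) i (j - 1) := by
  obtain ⟨J, rfl⟩ : ∃ J, j = J + 1 := ⟨j - 1, by omega⟩
  obtain ⟨D, rfl⟩ : ∃ D, d = D + 2 := ⟨d - 2, by omega⟩
  have hj1 : J + 1 - 1 = J := by omega
  have hd1 : D + 2 - 1 = D + 1 := by omega
  rw [hj1, hd1]
  unfold fdij
  rw [Finset.sum_range_succ' _ (D + 1),
    Finset.sum_range_succ'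
      (fun k => C ((catalan (D + 2 - 1 - k) * innerSum (D + 2) i J k : ℕ) : ℤ)
        * (1 - X) ^ k * X ^ (D + 2 - k)) (D + 1)]
  have h0 : innerSum (D + 2) i (J + 1) 0 = innerSum (D + 2) i J 0 := by
    rw [innerSum_zero, innerSum_zero]
  rw [h0]
  have hmul : (2 : Polynomial ℤ) * (X - 1)
      * ∑ k ∈ Finset.range (D + 1),
        C ((catalan (D + 1 - 1 - k) * innerSum (D + 1) i J k : ℕ) : ℤ)
          * (1 - X) ^ k * X ^ (D + 1 - k)
      = ∑ k ∈ Finset.range (D + 1),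
        (2 * (X - 1) * (C ((catalan (D + 1 - 1 - k) * innerSum (D + 1) i J k : ℕ) : ℤ)
          * (1 - X) ^ k * X ^ (D + 1 - k))) := by
    rw [Finset.mul_sum]
  rw [hmul]
  have hsum : ∑ k ∈ Finset.range (D + 1),
      C ((catalan (D + 2 - 1 - (k + 1)) * innerSum (D + 2) i (J + 1) (k + 1) : ℕ) : ℤ)
        * (1 - X) ^ (k + 1) * X ^ (D + 2 - (k + 1))
      = ∑ k ∈ Finset.range (D + 1),
        (C ((catalan (D + 2 - 1 - (k + 1)) * innerSum (D + 2) i J (k + 1) : ℕ) : ℤ)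
          * (1 - X) ^ (k + 1) * X ^ (D + 2 - (k + 1))
        - 2 * (X - 1) * (C ((catalan (D + 1 - 1 - k) * innerSum (D + 1) i J k : ℕ) : ℤ)
          * (1 - X) ^ k * X ^ (D + 1 - k))) := by
    refine Finset.sum_congr rfl fun k hk => ?_
    rw [Finset.mem_range] at hk
    have hkey := key (D + 2) i J k (by omega)
    rw [show D + 2 - 1 = D + 1 from rfl] at hkey
    have e1 : D + 2 - 1 - (k + 1) = D - k := by omega
    have e2 : D + 1 - 1 - k = D - k := by omega
    have e3 : D + 2 - (k + 1) = D + 1 - k := by omega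
    rw [e1, e2, e3, hkey, Nat.mul_add]
    simp only [Nat.cast_mul, Nat.cast_add, Nat.cast_ofNat, map_add, map_mul, map_ofNat]
    ring
  rw [hsum, Finset.sum_sub_distrib]
  ring
end

section
/- Define P_n(t) for n ≥ 1 implicitly by g_{n-1}(t) = (1-t)^n + t·P_n(t), where g_m(t) = ∑_k C_{m-k}·binom(m-k,k)·(t-1)^k. Then t divides the polynomial g_{n-1}(t) - (1-t)^n in ℤ[t] (so P_n(t) is a well-defined polynomial), and the polynomials P_n satisfy the recursion P_k(t) = (1-t)^{k-1} + ∑_{i=1}^{k-1} ( (1-t)^i·P_{k-i}(t) + t·P_i(t)·P_{k-i}(t) ) for all k ≥ 1. -/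
open Polynomial Finset

/-- The toric g-polynomial of the m-cube. -/
noncomputable def gCube (m : ℕ) : Polynomial ℤ :=
  ∑ k ∈ Finset.range (m / 2 + 1),
    C ((catalan (m - k) * (m - k).choose k : ℕ) : ℤ) * (X - 1) ^ k

/-- `P_n(t) := (g_{n-1}(t) - (1-t)^n)/t`, taken via division by the monic polynomial `X`. -/
noncomputable def Pden (n : ℕ) : Polynomial ℤ :=
  (gCube (n - 1) - (1 - X) ^ n) /ₘ X

namespace Stmt13Aux

/-- antidiagonal version of `gCube`. -/
noncomputable def g' (m : ℕ) : Polynomial ℤ :=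
  ∑ q ∈ antidiagonal m, C ((catalan q.1 * q.1.choose q.2 : ℕ) : ℤ) * (X - 1) ^ q.2

lemma ad_range {M : Type*} [AddCommMonoid M] (n : ℕ) (f : ℕ × ℕ → M) :
    ∑ p ∈ antidiagonal n, f p = ∑ k ∈ range (n + 1), f (n - k, k) := by
  refine Finset.sum_nbij' (fun p => p.2) (fun k => (n - k, k)) ?_ ?_ ?_ ?_ ?_
  · intro a ha; rw [Finset.HasAntidiagonal.mem_antidiagonal] at ha; rw [mem_range]; omega
  · intro a ha; rw [mem_range] at ha; rw [Finset.HasAntidiagonal.mem_antidiagonal]; dsimp only; omega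
  · intro a ha; rw [Finset.HasAntidiagonal.mem_antidiagonal] at ha
    ext <;> simp <;> omega
  · intro a _; rfl
  · intro a ha; rw [Finset.HasAntidiagonal.mem_antidiagonal] at ha
    congr 1; ext <;> simp <;> omega

lemma g'_range (m : ℕ) :
    g' m = ∑ k ∈ range (m + 1),
      C ((catalan (m - k) * (m - k).choose k : ℕ) : ℤ) * (X - 1) ^ k := by
  rw [g', ad_range]

lemma g_eq (m : ℕ) : gCube m = g' m := by
  rw [g'_range, gCube]
  refine Finset.sum_subset ?_ ?_
  · intro x hx; rw [mem_range] at hx ⊢; omega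
  · intro x hx hx'
    rw [mem_range] at hx hx'
    have : m - x < x := by omega
    rw [Nat.choose_eq_zero_of_lt this]
    simp

noncomputable def D (N : ℕ) : Polynomial ℤ := ∑ p ∈ antidiagonal N, g' p.1 * g' p.2

lemma nat_key (n k : ℕ) : catalan (n+1) * n.choose k =
    ∑ ab ∈ antidiagonal n, ∑ rs ∈ antidiagonal k,
      (catalan ab.1 * ab.1.choose rs.1) * (catalan ab.2 * ab.2.choose rs.2) := by
  rw [catalan_succ', Finset.sum_mul]
  refine Finset.sum_congr rfl fun ab hab => ?_
  rw [Finset.HasAntidiagonal.mem_antidiagonal] at hab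
  rw [show n.choose k = (ab.1 + ab.2).choose k by rw [hab], Nat.add_choose_eq, Finset.mul_sum]
  exact Finset.sum_congr rfl fun rs _ => by ring

lemma D_closed (N : ℕ) : D N =
    ∑ q ∈ antidiagonal N, C ((catalan (q.1+1) * q.1.choose q.2 : ℕ) : ℤ) * (X - 1) ^ q.2 := by
  have rhs : ∀ q : ℕ × ℕ, C ((catalan (q.1+1) * q.1.choose q.2 : ℕ) : ℤ) * (X - 1 : Polynomial ℤ) ^ q.2
      = ∑ x ∈ (antidiagonal q.1) ×ˢ (antidiagonal q.2),
          (C ((catalan x.1.1 * x.1.1.choose x.2.1 : ℕ) : ℤ) *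
           C ((catalan x.1.2 * x.1.2.choose x.2.2 : ℕ) : ℤ)) * (X - 1) ^ q.2 := by
    intro q
    rw [← Finset.sum_mul]
    congr 1
    rw [Finset.sum_product, nat_key]
    simp only [Nat.cast_sum, Nat.cast_mul, map_sum, map_mul]
  have lhs : ∀ p : ℕ × ℕ, g' p.1 * g' p.2 =
      ∑ x ∈ (antidiagonal p.1) ×ˢ (antidiagonal p.2),
        (C ((catalan x.1.1 * x.1.1.choose x.1.2 : ℕ) : ℤ) * (X - 1) ^ x.1.2) *
        (C ((catalan x.2.1 * x.2.1.choose x.2.2 : ℕ) : ℤ) * (X - 1) ^ x.2.2) := by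
    intro p
    rw [g', g', Finset.sum_mul_sum, ← Finset.sum_product']
  rw [D]
  simp only [rhs, lhs]
  rw [Finset.sum_sigma', Finset.sum_sigma']
  · refine Finset.sum_nbij'
      (fun x => ⟨(x.2.1.1 + x.2.2.1, x.2.1.2 + x.2.2.2), ((x.2.1.1, x.2.2.1), (x.2.1.2, x.2.2.2))⟩)
      (fun x => ⟨(x.2.1.1 + x.2.2.1, x.2.1.2 + x.2.2.2), ((x.2.1.1, x.2.2.1), (x.2.1.2, x.2.2.2))⟩)
      ?_ ?_ ?_ ?_ ?_
    · rintro ⟨p, a, b⟩ h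
      simp only [mem_sigma, Finset.HasAntidiagonal.mem_antidiagonal, mem_product] at h ⊢
      exact ⟨by omega, trivial, trivial⟩
    · rintro ⟨q, ab, rs⟩ h
      simp only [mem_sigma, Finset.HasAntidiagonal.mem_antidiagonal, mem_product] at h ⊢
      exact ⟨by omega, trivial, trivial⟩
    · rintro ⟨p, a, b⟩ h
      simp only [mem_sigma, Finset.HasAntidiagonal.mem_antidiagonal, mem_product] at h
      simp only [Sigma.mk.inj_iff, Prod.mk.injEq, heq_eq_eq]
      refine ⟨?_, ?_⟩
      · ext <;> simp <;> omega
      · constructor <;> ext <;> simp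
    · rintro ⟨q, ab, rs⟩ h
      simp only [mem_sigma, Finset.HasAntidiagonal.mem_antidiagonal, mem_product] at h
      simp only [Sigma.mk.inj_iff, Prod.mk.injEq, heq_eq_eq]
      refine ⟨?_, ?_⟩
      · ext <;> simp <;> omega
      · constructor <;> ext <;> simp
    · rintro ⟨p, a, b⟩ h
      simp only
      rw [pow_add]
      ring

lemma D_range (N : ℕ) : D N = ∑ k ∈ range (N + 1),
    C ((catalan (N - k + 1) * (N - k).choose k : ℕ) : ℤ) * (X - 1) ^ k := by
  rw [D_closed, ad_range]

lemma star (N : ℕ) : g' (N + 2) = D (N + 1) + (X - 1) * D N := by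
  rw [g'_range, D_range, D_range]
  have e1 : ∑ k ∈ range (N + 2 + 1),
      C ((catalan (N + 2 - k) * (N + 2 - k).choose k : ℕ) : ℤ) * (X - 1) ^ k
      = C ((catalan (N + 2) : ℕ) : ℤ) +
        ∑ k ∈ range (N + 2),
          C ((catalan (N + 1 - k) * (N + 1 - k).choose (k + 1) : ℕ) : ℤ) * (X - 1) ^ (k + 1) := by
    rw [Finset.sum_range_succ']
    rw [add_comm]
    congr 1
    · simp
    · refine Finset.sum_congr rfl fun k hk => ?_
      rw [mem_range] at hk
      rw [show N + 2 - (k + 1) = N + 1 - k by omega]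
  have e2 : ∑ k ∈ range (N + 1 + 1),
      C ((catalan (N + 1 - k + 1) * (N + 1 - k).choose k : ℕ) : ℤ) * (X - 1) ^ k
      = C ((catalan (N + 2) : ℕ) : ℤ) +
        ∑ k ∈ range (N + 1),
          C ((catalan (N - k + 1) * (N - k).choose (k + 1) : ℕ) : ℤ) * (X - 1) ^ (k + 1) := by
    rw [Finset.sum_range_succ']
    rw [add_comm]
    congr 1
    · simp
    · refine Finset.sum_congr rfl fun k hk => ?_
      rw [mem_range] at hk
      rw [show N + 1 - (k + 1) = N - k by omega]
  rw [e1, e2]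
  have e3 : ∑ k ∈ range (N + 2),
      C ((catalan (N + 1 - k) * (N + 1 - k).choose (k + 1) : ℕ) : ℤ) * (X - 1) ^ (k + 1)
      = ∑ k ∈ range (N + 1),
          C ((catalan (N + 1 - k) * (N + 1 - k).choose (k + 1) : ℕ) : ℤ) * (X - 1) ^ (k + 1) := by
    rw [Finset.sum_range_succ]
    simp
  rw [e3, mul_sum, add_assoc, ← Finset.sum_add_distrib]
  congr 1
  refine Finset.sum_congr rfl fun k hk => ?_
  rw [mem_range] at hk
  have h1 : N + 1 - k = N - k + 1 := by omega
  rw [h1, Nat.choose_succ_succ]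
  push_cast
  rw [mul_add, map_add]
  simp only [Nat.succ_eq_add_one]
  ring

lemma g'_zero : g' 0 = 1 := by
  rw [g'_range]
  simp

lemma g'_one : g' 1 = 1 := by
  rw [g'_range]
  rw [Finset.sum_range_succ, Finset.sum_range_succ]
  norm_num

lemma D_zero : D 0 = 1 := by
  rw [D]
  simp [g'_zero]

lemma key : ∀ K : ℕ, ∑ i ∈ range (K + 2), (1 - X : Polynomial ℤ) ^ (K + 1 - i) * g' i
    = (1 - X) ^ (K + 1) + D K := by
  intro K
  induction K with
  | zero =>
      rw [Finset.sum_range_succ, Finset.sum_range_succ]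
      simp [g'_zero, g'_one, D_zero]
  | succ K IH =>
      rw [show K + 1 + 2 = (K + 2) + 1 from rfl, Finset.sum_range_succ]
      have h1 : ∑ i ∈ range (K + 2), (1 - X : Polynomial ℤ) ^ (K + 1 + 1 - i) * g' i
          = (1 - X) * ∑ i ∈ range (K + 2), (1 - X) ^ (K + 1 - i) * g' i := by
        rw [mul_sum]
        refine Finset.sum_congr rfl fun i hi => ?_
        rw [mem_range] at hi
        rw [show K + 1 + 1 - i = (K + 1 - i) + 1 by omega, pow_succ]
        ring
      rw [h1, IH, star K]
      rw [show K + 1 + 1 - (K + 2) = 0 by omega]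
      ring

lemma coeff0 (m : ℕ) : (g' m).coeff 0 = 1 := by
  induction m using Nat.strong_induction_on with
  | _ m ih =>
    match m with
    | 0 => rw [g'_zero]; simp
    | 1 => rw [g'_one]; simp
    | (N + 2) =>
      have hD : ∀ M, M < N + 2 → (D M).coeff 0 = (M : ℤ) + 1 := by
        intro M hM
        rw [D, Polynomial.finset_sum_coeff]
        have : ∀ p ∈ antidiagonal M, (g' p.1 * g' p.2).coeff 0 = 1 := by
          intro p hp
          rw [Finset.HasAntidiagonal.mem_antidiagonal] at hp
          rw [Polynomial.mul_coeff_zero, ih p.1 (by omega), ih p.2 (by omega)]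
          ring
        rw [Finset.sum_congr rfl this, Finset.sum_const, Nat.card_antidiagonal]
        simp
      rw [star N, Polynomial.coeff_add, Polynomial.mul_coeff_zero,
        hD (N + 1) (by omega), hD N (by omega)]
      simp

lemma Icc_range {M : Type*} [AddCommMonoid M] (n : ℕ) (f : ℕ → M) :
    ∑ i ∈ Icc 1 n, f i = ∑ j ∈ range n, f (j + 1) := by
  refine Finset.sum_nbij' (fun i => i - 1) (fun j => j + 1) ?_ ?_ ?_ ?_ ?_
  · intro a ha; rw [mem_Icc] at ha; rw [mem_range]; omega
  · intro a ha; rw [mem_range] at ha; rw [mem_Icc]; omega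
  · intro a ha; rw [mem_Icc] at ha; omega
  · intro a _; rfl
  · intro a ha; rw [mem_Icc] at ha
    rw [show a - 1 + 1 = a by omega]

lemma part1 (n : ℕ) (_hn : 1 ≤ n) : (X : Polynomial ℤ) ∣ (gCube (n - 1) - (1 - X) ^ n) := by
  rw [Polynomial.X_dvd_iff, Polynomial.coeff_sub, g_eq, coeff0]
  have h : ((1 - X : Polynomial ℤ) ^ n).coeff 0 = 1 := by
    rw [Polynomial.coeff_zero_eq_eval_zero]
    simp
  rw [h]
  ring

lemma hXP (j : ℕ) (hj : 1 ≤ j) :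
    (X : Polynomial ℤ) * Pden j = gCube (j - 1) - (1 - X) ^ j := by
  have h0 : (gCube (j - 1) - (1 - X) ^ j) %ₘ X = 0 :=
    (Polynomial.modByMonic_eq_zero_iff_dvd Polynomial.monic_X).mpr (part1 j hj)
  have h := Polynomial.modByMonic_add_div (gCube (j - 1) - (1 - X) ^ j) X
  rw [h0, zero_add] at h
  rw [Pden, h]

lemma main2 (k : ℕ) (hk : 1 ≤ k) :
    Pden k = (1 - X) ^ (k - 1) +
      ∑ i ∈ Finset.Icc 1 (k - 1),
        ((1 - X) ^ i * Pden (k - i) + X * Pden i * Pden (k - i)) := by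
  apply mul_left_cancel₀ (Polynomial.X_ne_zero (R := ℤ))
  rw [hXP k hk, mul_add, Finset.mul_sum]
  have hterm : ∀ i ∈ Icc 1 (k - 1),
      (X : Polynomial ℤ) * ((1 - X) ^ i * Pden (k - i) + X * Pden i * Pden (k - i))
      = gCube (i - 1) * (gCube (k - i - 1) - (1 - X) ^ (k - i)) := by
    intro i hi
    rw [mem_Icc] at hi
    have h2 : 1 ≤ k - i := by omega
    calc (X : Polynomial ℤ) * ((1 - X) ^ i * Pden (k - i) + X * Pden i * Pden (k - i))
        = (1 - X) ^ i * (X * Pden (k - i)) + (X * Pden i) * (X * Pden (k - i)) := by ring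
      _ = (1 - X) ^ i * (gCube (k - i - 1) - (1 - X) ^ (k - i)) +
          (gCube (i - 1) - (1 - X) ^ i) * (gCube (k - i - 1) - (1 - X) ^ (k - i)) := by
            rw [hXP i hi.1, hXP (k - i) h2]
      _ = gCube (i - 1) * (gCube (k - i - 1) - (1 - X) ^ (k - i)) := by ring
  rw [Finset.sum_congr rfl hterm]
  obtain ⟨K, rfl⟩ : ∃ K, k = K + 1 := ⟨k - 1, by omega⟩
  match K with
  | 0 =>
    simp only [Nat.sub_self, Icc_self]
    norm_num
    rw [g_eq, g'_zero]
    ring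
  | (N + 1) =>
    rw [show N + 1 + 1 - 1 = N + 1 from rfl]
    rw [Icc_range]
    have hre : ∀ i ∈ range (N + 1),
        gCube (i + 1 - 1) * (gCube (N + 1 + 1 - (i + 1) - 1) - (1 - X : Polynomial ℤ) ^ (N + 1 + 1 - (i + 1)))
        = g' i * g' (N - i) - (1 - X) ^ (N + 1 - i) * g' i := by
      intro i hi
      rw [mem_range] at hi
      rw [show i + 1 - 1 = i from rfl, show N + 1 + 1 - (i + 1) - 1 = N - i by omega,
        show N + 1 + 1 - (i + 1) = N + 1 - i by omega, g_eq, g_eq]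
      ring
    rw [Finset.sum_congr rfl hre, Finset.sum_sub_distrib]
    have hD : ∑ i ∈ range (N + 1), g' i * g' (N - i) = D N := by
      rw [D, Finset.Nat.sum_antidiagonal_eq_sum_range_succ_mk]
    have hkey : ∑ i ∈ range (N + 1), (1 - X : Polynomial ℤ) ^ (N + 1 - i) * g' i
        = (1 - X) ^ (N + 1) + D N - g' (N + 1) := by
      have hk2 := key N
      rw [Finset.sum_range_succ, show N + 1 - (N + 1) = 0 by omega, pow_zero, one_mul] at hk2
      rw [eq_sub_iff_add_eq]
      exact hk2
    rw [hD, hkey, g_eq, pow_succ (1 - X : Polynomial ℤ) (N + 1)]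
    ring

end Stmt13Aux

/-- `t` divides `g_{n-1}(t) - (1-t)^n`, so `P_n` is a well-defined polynomial, and the
polynomials `P_n` satisfy the Denise–Simion recursion. -/
theorem stmt13 :
    (∀ n : ℕ, 1 ≤ n → (X : Polynomial ℤ) ∣ (gCube (n - 1) - (1 - X) ^ n)) ∧
      (∀ k : ℕ, 1 ≤ k →
        Pden k = (1 - X) ^ (k - 1) +
          ∑ i ∈ Finset.Icc 1 (k - 1),
            ((1 - X) ^ i * Pden (k - i) + X * Pden i * Pden (k - i))) := by
  exact ⟨Stmt13Aux.part1, Stmt13Aux.main2⟩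
end

section
/- Let M(n) be the set of colored Motzkin paths from (0,0) to (n,0) with steps NE=(1,1), SE=(1,-1), and horizontal (1,0), where a horizontal step at height 0 must be colored red, and a horizontal step at positive height may be colored red or blue. For a path p let s(p) be the number of occurrences of two consecutive steps of the form (NE, red), (blue, red), (blue, SE), or (NE, SE). Then ∑_{p ∈ M(n)} t^{s(p)} = ∑_{j≥0} (-1)^j·(1-t)^j·binom(n-j,j)·C_{n-j}, as polynomials in t. -/
open Polynomial Finset
open scoped Classical

/-- A step of a colored Motzkin path: North-East, South-East, red horizontal, or
blue horizontal. -/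
inductive MStep : Type
  | up | down | redH | blueH
  deriving DecidableEq

instance : Fintype MStep where
  elems := {MStep.up, MStep.down, MStep.redH, MStep.blueH}
  complete := fun x => by cases x <;> simp

/-- The vertical displacement of a step. -/
def MStep.val : MStep → ℤ
  | .up => 1
  | .down => -1
  | .redH => 0
  | .blueH => 0

/-- The height of the path `p` after its first `i` steps. -/
def ht {n : ℕ} (p : Fin n → MStep) (i : ℕ) : ℤ :=
  ∑ j : Fin n, if (j : ℕ) < i then (p j).val else 0

/-- `p` is a valid colored Motzkin path from `(0,0)` to `(n,0)`: heights stay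
nonnegative, the path ends at height `0`, and a horizontal step at height `0` must be
red (blue horizontal steps occur only at positive height). -/
def Valid {n : ℕ} (p : Fin n → MStep) : Prop :=
  (∀ i : ℕ, i ≤ n → 0 ≤ ht p i) ∧ ht p n = 0 ∧
    ∀ j : Fin n, p j = MStep.blueH → 0 < ht p (j : ℕ)

/-- The pairs of consecutive steps counted by the statistic `s`. -/
def GoodPair : MStep → MStep → Prop := fun a b =>
  (a = .up ∧ b = .redH) ∨ (a = .blueH ∧ b = .redH) ∨
    (a = .blueH ∧ b = .down) ∨ (a = .up ∧ b = .down)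

/-- `s(p)`: the number of occurrences of two consecutive steps of the form
`(NE,red)`, `(blue,red)`, `(blue,SE)` or `(NE,SE)`. -/
noncomputable def sOcc {n : ℕ} (p : Fin n → MStep) : ℕ :=
  (Finset.univ.filter
    (fun j : Fin n => ∃ h : (j : ℕ) + 1 < n, GoodPair (p j) (p ⟨(j : ℕ) + 1, h⟩))).card

namespace DS14
def OkG {α : Type} (val : α → ℤ) (pos : α → Prop) : ℤ → List α → Prop
  | h, [] => h = 0
  | h, a :: l => 0 ≤ h ∧ (pos a → 0 < h) ∧ OkG val pos (h + val a) l


lemma OkG.nonneg {α : Type} {val : α → ℤ} {pos : α → Prop} {h : ℤ} {l : List α}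
    (H : OkG val pos h l) : 0 ≤ h := by
  cases l with
  | nil => simp only [OkG] at H; omega
  | cons a l => exact H.1


lemma okG_iff {α : Type} (val : α → ℤ) (pos : α → Prop) :
    ∀ (l : List α) (h : ℤ),
    OkG val pos h l ↔
      ((∀ i, i ≤ l.length → 0 ≤ h + ((l.take i).map val).sum) ∧
       h + (l.map val).sum = 0 ∧
       ∀ (k : ℕ) (hk : k < l.length), pos (l.get ⟨k, hk⟩) →
         0 < h + ((l.take k).map val).sum)
  | [], h => by simp [OkG]; intro h'; omega
  | a :: l, h => by
    show (0 ≤ h ∧ (pos a → 0 < h) ∧ OkG val pos (h + val a) l) ↔ _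
    rw [okG_iff val pos l (h + val a)]
    constructor
    · rintro ⟨h0, hpos, hA, hB, hC⟩
      refine ⟨?_, ?_, ?_⟩
      · intro i hi
        cases i with
        | zero => simpa using h0
        | succ j =>
          have := hA j (by simpa using hi)
          simp only [List.take_succ_cons, List.map_cons, List.sum_cons]
          omega
      · simp only [List.map_cons, List.sum_cons]; omega
      · intro k hk hp
        cases k with
        | zero => simpa using hpos hp
        | succ j =>
          have := hC j (by simpa using hk) (by simpa using hp)
          simp only [List.take_succ_cons, List.map_cons, List.sum_cons]
          omega
    · rintro ⟨hA, hB, hC⟩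
      have h0 : 0 ≤ h := by simpa using hA 0 (by simp)
      refine ⟨h0, fun hp => by simpa using hC 0 (by simp) (by simpa using hp), ?_, ?_, ?_⟩
      · intro i hi
        have := hA (i+1) (by simpa using hi)
        simp only [List.take_succ_cons, List.map_cons, List.sum_cons] at this
        omega
      · have := hB; simp only [List.map_cons, List.sum_cons] at this; omega
      · intro k hk hp
        have := hC (k+1) (by simpa using hk) (by simpa using hp)
        simp only [List.take_succ_cons, List.map_cons, List.sum_cons] at this
        omega


def Ok : ℤ → List MStep → Prop := OkG MStep.val (fun a => a = MStep.blueH)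

lemma Ok_nil {h : ℤ} : Ok h [] ↔ h = 0 := Iff.rfl
lemma Ok_cons {h : ℤ} {a : MStep} {l : List MStep} :
    Ok h (a :: l) ↔ 0 ≤ h ∧ (a = MStep.blueH → 0 < h) ∧ Ok (h + a.val) l := Iff.rfl

lemma Ok.nonneg {h : ℤ} {l : List MStep} (H : Ok h l) : 0 ≤ h := by
  cases l with
  | nil => rw [Ok_nil] at H; omega
  | cons a l => exact (Ok_cons.mp H).1

def expandPair : MStep → MStep × MStep
  | .up => (.up, .redH)
  | .blueH => (.blueH, .redH)
  | .down => (.blueH, .down)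
  | .redH => (.up, .down)

def contractPair : MStep → MStep → MStep
  | .up, .redH => .up
  | .blueH, .redH => .blueH
  | .blueH, .down => .down
  | .up, .down => .redH
  | a, _ => a

def E : List (MStep × Bool) → List (MStep × Bool)
  | [] => []
  | (a, false) :: r => (a, false) :: E r
  | (a, true) :: r => ((expandPair a).1, true) :: ((expandPair a).2, false) :: E r

def F : List (MStep × Bool) → List (MStep × Bool)
  | [] => []
  | (a, false) :: r => (a, false) :: F r
  | (_, true) :: [] => []
  | (a, true) :: b :: r => (contractPair a b.1, true) :: F r

def MarksGood : List (MStep × Bool) → Prop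
  | [] => True
  | (_, m) :: [] => m = false
  | (a, m) :: b :: r => (m = true → GoodPair a b.1) ∧ MarksGood (b :: r)

lemma marksGood_tail {x : MStep × Bool} {r : List (MStep × Bool)} (h : MarksGood (x :: r)) :
    MarksGood r := by
  cases r with
  | nil => trivial
  | cons b r => obtain ⟨a, m⟩ := x; exact h.2

lemma marksGood_cons_false {a : MStep} {r : List (MStep × Bool)} (h : MarksGood r) :
    MarksGood ((a, false) :: r) := by
  cases r with
  | nil => rfl
  | cons b r => exact ⟨by simp, h⟩

lemma length_E (w : List (MStep × Bool)) :
    (E w).length = w.length + w.countP (fun x => x.2) := by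
  induction w with
  | nil => rfl
  | cons x r ih =>
    obtain ⟨a, m⟩ := x
    cases m <;> simp [E, List.countP_cons, ih] <;> omega

lemma countP_E (w : List (MStep × Bool)) :
    (E w).countP (fun x => x.2) = w.countP (fun x => x.2) := by
  induction w with
  | nil => rfl
  | cons x r ih =>
    obtain ⟨a, m⟩ := x
    cases m <;> simp [E, List.countP_cons, ih, expandPair]

lemma marksGood_E (w : List (MStep × Bool)) : MarksGood (E w) := by
  induction w with
  | nil => trivial
  | cons x r ih =>
    obtain ⟨a, m⟩ := x
    cases m with
    | false => exact marksGood_cons_false ih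
    | true =>
      refine ⟨fun _ => ?_, marksGood_cons_false ih⟩
      cases a <;> simp [expandPair, GoodPair]

lemma ok_E (w : List (MStep × Bool)) (h : ℤ) :
    Ok h ((E w).map Prod.fst) ↔ Ok h (w.map Prod.fst) := by
  induction w generalizing h with
  | nil => rfl
  | cons x r ih =>
    obtain ⟨a, m⟩ := x
    cases m with
    | false =>
      simp only [E, List.map_cons, Ok_cons]
      rw [ih]
    | true =>
      cases a with
      | up =>
        simp only [E, expandPair, List.map_cons, Ok_cons, MStep.val]
        rw [show (h:ℤ) + 1 + 0 = h + 1 by ring, ih]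
        constructor
        · rintro ⟨h1, -, -, -, h5⟩
          exact ⟨h1, by simp, h5⟩
        · rintro ⟨h1, -, h3⟩
          exact ⟨h1, by simp, by omega, by simp, h3⟩
      | down =>
        simp only [E, expandPair, List.map_cons, Ok_cons, MStep.val]
        rw [show (h:ℤ) + 0 + -1 = h + -1 by ring, show (h:ℤ) + 0 = h by ring, ih]
        constructor
        · rintro ⟨h1, h2, -, -, h5⟩
          exact ⟨h1, by simp, h5⟩
        · rintro ⟨h1, -, h3⟩
          have := h3.nonneg
          exact ⟨h1, fun _ => by omega, by omega, by simp, h3⟩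
      | redH =>
        simp only [E, expandPair, List.map_cons, Ok_cons, MStep.val]
        rw [show (h:ℤ) + 1 + -1 = h + 0 by ring, ih]
        constructor
        · rintro ⟨h1, -, -, -, h5⟩
          exact ⟨h1, by simp, h5⟩
        · rintro ⟨h1, -, h3⟩
          exact ⟨h1, by simp, by omega, by simp, h3⟩
      | blueH =>
        simp only [E, expandPair, List.map_cons, Ok_cons, MStep.val]
        rw [show (h:ℤ) + 0 + 0 = h + 0 by ring, ih]
        constructor
        · rintro ⟨h1, h2, -, -, h5⟩
          exact ⟨h1, h2, h5⟩
        · rintro ⟨h1, h2, h3⟩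
          exact ⟨h1, h2, by omega, by simp, h3⟩

lemma F_E (w : List (MStep × Bool)) : F (E w) = w := by
  induction w with
  | nil => rfl
  | cons x r ih =>
    obtain ⟨a, m⟩ := x
    cases m with
    | false => simp [E, F, ih]
    | true =>
      simp only [E, F, ih]
      cases a <;> rfl

lemma goodPair_snd {a b : MStep} (h : GoodPair a b) : b = .redH ∨ b = .down := by
  rcases h with ⟨_, h⟩ | ⟨_, h⟩ | ⟨_, h⟩ | ⟨_, h⟩ <;> simp [h]

lemma goodPair_fst {a b : MStep} (h : GoodPair a b) : a = .up ∨ a = .blueH := by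
  rcases h with ⟨h, _⟩ | ⟨h, _⟩ | ⟨h, _⟩ | ⟨h, _⟩ <;> simp [h]

lemma goodPair_chain {a b c : MStep} (h1 : GoodPair a b) (h2 : GoodPair b c) : False := by
  rcases goodPair_snd h1 with h | h <;> rcases goodPair_fst h2 with h' | h' <;> simp_all

lemma expand_contract {a b : MStep} (h : GoodPair a b) :
    expandPair (contractPair a b) = (a, b) := by
  rcases h with ⟨h1, h2⟩ | ⟨h1, h2⟩ | ⟨h1, h2⟩ | ⟨h1, h2⟩ <;> subst h1 <;> subst h2 <;> rfl

lemma E_F : ∀ w : List (MStep × Bool), MarksGood w → E (F w) = w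
  | [], _ => rfl
  | (a, false) :: r, h => by
    simp only [F, E]
    rw [E_F r (marksGood_tail h)]
  | (a, true) :: [], h => by simp [MarksGood] at h
  | (a, true) :: (b, mb) :: r, h => by
    have hg : GoodPair a b := h.1 rfl
    have hmb : mb = false := by
      cases r with
      | nil => exact h.2
      | cons c r' =>
        by_contra hmb
        rw [Bool.not_eq_false] at hmb
        exact goodPair_chain hg (h.2.1 hmb)
    simp only [F, E]
    rw [expand_contract hg, E_F r (marksGood_tail (marksGood_tail h)), hmb]

lemma countP_F (w : List (MStep × Bool)) (h : MarksGood w) :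
    (F w).countP (fun x => x.2) = w.countP (fun x => x.2) := by
  conv_rhs => rw [← E_F w h]
  rw [countP_E]

lemma length_F (w : List (MStep × Bool)) (h : MarksGood w) :
    (F w).length + w.countP (fun x => x.2) = w.length := by
  conv_rhs => rw [← E_F w h]
  rw [length_E, countP_F w h]

lemma ok_F (w : List (MStep × Bool)) (h : MarksGood w) (h0 : ℤ) :
    Ok h0 ((F w).map Prod.fst) ↔ Ok h0 (w.map Prod.fst) := by
  conv_rhs => rw [← E_F w h]
  rw [ok_E]

lemma marksGood_iff (w : List (MStep × Bool)) :
    MarksGood w ↔ ∀ (k : ℕ) (hk : k < w.length), (w.get ⟨k, hk⟩).2 = true →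
      ∃ hk2 : k + 1 < w.length, GoodPair (w.get ⟨k, hk⟩).1 (w.get ⟨k+1, hk2⟩).1 := by
  induction w with
  | nil => simp [MarksGood]
  | cons x r ih =>
    obtain ⟨a, m⟩ := x
    cases r with
    | nil =>
      simp only [MarksGood]
      constructor
      · intro h k hk
        have hk0 : k = 0 := by simpa using hk
        subst hk0
        subst h
        intro hm
        simp at hm
      · intro h
        by_contra hm
        rw [Bool.not_eq_false] at hm
        obtain ⟨h2, -⟩ := h 0 (by simp) hm
        simp at h2
    | cons b r =>
      simp only [MarksGood]
      rw [ih]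
      constructor
      · rintro ⟨h1, h2⟩ k hk hm
        cases k with
        | zero => exact ⟨by simp, h1 hm⟩
        | succ j =>
          obtain ⟨hj2, hg⟩ := h2 j (by simpa using hk) (by simpa using hm)
          exact ⟨by simpa using hj2, by simpa using hg⟩
      · intro h
        constructor
        · intro hm
          obtain ⟨h2, hg⟩ := h 0 (by simp) (by simpa using hm)
          simpa using hg
        · intro k hk hm
          obtain ⟨hk2, hg⟩ := h (k+1) (by simpa using hk) (by simpa using hm)
          exact ⟨by simpa using hk2, by simpa using hg⟩


def ValidL (l : List MStep) : Prop := Ok 0 l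

lemma ht_eq {n : ℕ} (p : Fin n → MStep) (i : ℕ) :
    ht p i = (((List.ofFn p).take i).map MStep.val).sum := by
  rw [List.map_take, List.map_ofFn, List.sum_take_ofFn, ht, Finset.sum_filter]
  rfl

lemma valid_iff_validL {n : ℕ} (p : Fin n → MStep) :
    Valid p ↔ ValidL (List.ofFn p) := by
  unfold ValidL Ok
  rw [okG_iff]
  simp only [zero_add, List.length_ofFn]
  constructor
  · rintro ⟨hA, hB, hC⟩
    refine ⟨fun i hi => by rw [← ht_eq]; exact hA i hi, ?_, ?_⟩
    · rw [← List.take_of_length_le (le_of_eq (List.length_ofFn (f := p))), ← ht_eq]; exact hB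
    · intro k hk hp
      rw [← ht_eq]
      rw [List.get_ofFn] at hp
      exact hC _ hp
  · rintro ⟨hA, hB, hC⟩
    refine ⟨fun i hi => by rw [ht_eq]; exact hA i hi, ?_, ?_⟩
    · rw [ht_eq]
      rw [List.take_of_length_le (le_of_eq (List.length_ofFn (f := p)))]
      exact hB
    · intro j hp
      rw [ht_eq]
      refine hC j j.isLt ?_
      rw [List.get_ofFn]
      simpa using hp


end DS14

namespace DS14
open DyckStep

def dval : DyckStep → ℤ
  | U => 1
  | D => -1

def OkD : ℤ → List DyckStep → Prop := OkG dval (fun _ => False)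

lemma OkD_nil {h : ℤ} : OkD h [] ↔ h = 0 := Iff.rfl
lemma OkD_cons {h : ℤ} {x : DyckStep} {l : List DyckStep} :
    OkD h (x :: l) ↔ 0 ≤ h ∧ OkD (h + dval x) l := by
  constructor
  · rintro ⟨h1, -, h3⟩
    exact ⟨h1, h3⟩
  · rintro ⟨h1, h3⟩
    exact ⟨h1, fun f => f.elim, h3⟩

lemma OkD.nonneg {h : ℤ} {l : List DyckStep} (H : OkD h l) : 0 ≤ h := by
  cases l with
  | nil => rw [OkD_nil] at H; omega
  | cons x l => exact (OkD_cons.mp H).1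

lemma dval_sum_eq (l : List DyckStep) : (l.map dval).sum = (l.count U : ℤ) - l.count D := by
  induction l with
  | nil => simp
  | cons x r ih =>
    cases x <;> simp [dval, List.count_cons, ih] <;> push_cast <;> ring

lemma okD_iff (l : List DyckStep) :
    OkD 0 l ↔ (l.count U = l.count D ∧ ∀ i, (l.take i).count D ≤ (l.take i).count U) := by
  rw [OkD, okG_iff]
  constructor
  · rintro ⟨hA, hB, -⟩
    rw [zero_add, dval_sum_eq] at hB
    have hcnt : l.count U = l.count D := by omega
    refine ⟨hcnt, fun i => ?_⟩
    by_cases hi : i ≤ l.length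
    · have := hA i hi
      rw [zero_add, dval_sum_eq] at this
      omega
    · rw [List.take_of_length_le (by omega)]
      omega
  · rintro ⟨h1, h2⟩
    refine ⟨fun i _ => ?_, ?_, fun k hk hp => hp.elim⟩
    · rw [zero_add, dval_sum_eq]
      have := h2 i
      omega
    · rw [zero_add, dval_sum_eq]
      omega

def expandDyck : MStep → List DyckStep
  | .up => [U, U]
  | .redH => [U, D]
  | .blueH => [D, U]
  | .down => [D, D]

def mexpand (l : List MStep) : List DyckStep := l.flatMap expandDyck

lemma mexpand_cons (a : MStep) (l : List MStep) :
    mexpand (a :: l) = expandDyck a ++ mexpand l := rfl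

lemma length_mexpand (l : List MStep) : (mexpand l).length = 2 * l.length := by
  induction l with
  | nil => rfl
  | cons a r ih =>
    cases a <;> simp [mexpand_cons, expandDyck, ih] <;> omega

lemma ok_mexpand (l : List MStep) : ∀ h : ℤ, Ok h l ↔ OkD (2*h) (mexpand l) := by
  induction l with
  | nil =>
    intro h
    rw [show mexpand [] = [] from rfl, Ok_nil, OkD_nil]
    omega
  | cons a r ih =>
    intro h
    cases a with
    | up =>
      rw [mexpand_cons, show expandDyck MStep.up ++ mexpand r = U :: U :: mexpand r from rfl,
        Ok_cons, OkD_cons, OkD_cons]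
      simp only [MStep.val, dval]
      rw [show 2*h + 1 + 1 = 2*(h+1) by ring, ← ih]
      constructor
      · rintro ⟨h1, -, h3⟩
        exact ⟨by omega, by omega, h3⟩
      · rintro ⟨h1, -, h3⟩
        exact ⟨by omega, by simp, h3⟩
    | down =>
      rw [mexpand_cons, show expandDyck MStep.down ++ mexpand r = D :: D :: mexpand r from rfl,
        Ok_cons, OkD_cons, OkD_cons]
      simp only [MStep.val, dval]
      rw [show 2*h + -1 + -1 = 2*(h+ -1) by ring, ← ih]
      constructor
      · rintro ⟨h1, -, h3⟩
        have := h3.nonneg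
        exact ⟨by omega, by omega, h3⟩
      · rintro ⟨h1, h2, h3⟩
        exact ⟨by omega, by simp, h3⟩
    | redH =>
      rw [mexpand_cons, show expandDyck MStep.redH ++ mexpand r = U :: D :: mexpand r from rfl,
        Ok_cons, OkD_cons, OkD_cons]
      simp only [MStep.val, dval]
      rw [show 2*h + 1 + -1 = 2*(h+0) by ring, ← ih]
      constructor
      · rintro ⟨h1, -, h3⟩
        exact ⟨by omega, by omega, h3⟩
      · rintro ⟨h1, -, h3⟩
        exact ⟨by omega, by simp, h3⟩
    | blueH =>
      rw [mexpand_cons, show expandDyck MStep.blueH ++ mexpand r = D :: U :: mexpand r from rfl,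
        Ok_cons, OkD_cons, OkD_cons]
      simp only [MStep.val, dval]
      rw [show 2*h + -1 + 1 = 2*(h+0) by ring, ← ih]
      constructor
      · rintro ⟨h1, h2, h3⟩
        exact ⟨by omega, by have := h2 trivial; omega, h3⟩
      · rintro ⟨h1, h2, h3⟩
        exact ⟨by omega, fun _ => by omega, h3⟩

def pairMStep : DyckStep → DyckStep → MStep
  | U, U => .up
  | U, D => .redH
  | D, U => .blueH
  | D, D => .down

def pairDyck : List DyckStep → List MStep
  | x :: y :: r => pairMStep x y :: pairDyck r
  | _ => []

lemma pair_mexpand (l : List MStep) : pairDyck (mexpand l) = l := by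
  induction l with
  | nil => rfl
  | cons a r ih =>
    cases a <;>
    · rw [mexpand_cons]
      show _ :: pairDyck (mexpand r) = _
      rw [ih]
      rfl

lemma mexpand_pairDyck : ∀ l : List DyckStep, l.length % 2 = 0 → mexpand (pairDyck l) = l
  | [], _ => rfl
  | [x], h => by simp at h
  | x :: y :: r, h => by
    show expandDyck (pairMStep x y) ++ mexpand (pairDyck r) = _
    rw [mexpand_pairDyck r (by simp only [List.length_cons] at h; omega)]
    cases x <;> cases y <;> rfl

lemma length_pairDyck : ∀ l : List DyckStep, (pairDyck l).length = l.length / 2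
  | [] => rfl
  | [x] => by simp [pairDyck]
  | x :: y :: r => by
    simp only [pairDyck, List.length_cons, length_pairDyck r]
    omega

lemma ofFn_getD {α : Type} (d0 : α) (m : ℕ) (l : List α) (h : l.length = m) :
    List.ofFn (fun i : Fin m => l.getD i d0) = l := by
  subst h
  apply List.ext_getElem (by simp)
  intro i h1 h2
  simp only [List.getElem_ofFn]
  exact List.getD_eq_getElem l d0 h2

noncomputable def toDyck {m : ℕ} (p : Fin m → MStep) (hp : Valid p) : DyckWord := by
  refine ⟨mexpand (List.ofFn p), ?_, ?_⟩
  · have := (okD_iff (mexpand (List.ofFn p))).mp ?_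
    · exact this.1
    · rw [show (0:ℤ) = 2*0 by ring, ← ok_mexpand]
      exact (valid_iff_validL p).mp hp
  · intro i
    have := (okD_iff (mexpand (List.ofFn p))).mp ?_
    · exact this.2 i
    · rw [show (0:ℤ) = 2*0 by ring, ← ok_mexpand]
      exact (valid_iff_validL p).mp hp

lemma semilength_toDyck {m : ℕ} (p : Fin m → MStep) (hp : Valid p) :
    (toDyck p hp).semilength = m := by
  have h2 : 2 * (toDyck p hp).semilength = 2 * m := by
    rw [DyckWord.two_mul_semilength_eq_length]
    show (mexpand (List.ofFn p)).length = 2 * m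
    rw [length_mexpand, List.length_ofFn]
  omega

lemma card_valid (m : ℕ) :
    ((Finset.univ : Finset (Fin m → MStep)).filter Valid).card = catalan m := by
  classical
  rw [← DyckWord.card_dyckWord_semilength_eq_catalan m, ← Finset.card_univ]
  have evenlen : ∀ d : DyckWord, d.toList.length % 2 = 0 := by
    intro d
    have := d.two_mul_semilength_eq_length
    omega
  have lenpd : ∀ d : DyckWord, d.semilength = m → (pairDyck d.toList).length = m := by
    intro d hd
    rw [length_pairDyck, ← d.two_mul_semilength_eq_length, hd]
    omega
  refine Finset.card_bij' (fun p hp => ⟨toDyck p (Finset.mem_filter.mp hp).2,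
      semilength_toDyck p (Finset.mem_filter.mp hp).2⟩)
    (fun d _ => fun i : Fin m => (pairDyck d.1.toList).getD i MStep.up)
    (fun p hp => Finset.mem_univ _) (fun d _ => ?_) (fun p hp => ?_) (fun d hd => ?_)
  · -- membership: the reconstructed path is valid
    rw [Finset.mem_filter]
    refine ⟨Finset.mem_univ _, ?_⟩
    rw [valid_iff_validL, ofFn_getD MStep.up m _ (lenpd d.1 d.2)]
    show Ok 0 (pairDyck d.1.toList)
    rw [show (0:ℤ) = 2*0 by ring, ok_mexpand, mexpand_pairDyck _ (evenlen d.1)]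
    show OkD 0 d.1.toList
    rw [okD_iff]
    exact ⟨d.1.count_U_eq_count_D, d.1.count_D_le_count_U⟩
  · -- left inverse
    apply List.ofFn_injective
    rw [ofFn_getD MStep.up m _ ?_]
    · show pairDyck (mexpand (List.ofFn p)) = _
      rw [pair_mexpand]
    · show (pairDyck (mexpand (List.ofFn p))).length = m
      rw [pair_mexpand, List.length_ofFn]
  · -- right inverse
    apply Subtype.ext
    apply DyckWord.ext
    show mexpand (List.ofFn _) = d.1.toList
    rw [ofFn_getD MStep.up m _ (lenpd d.1 d.2), mexpand_pairDyck _ (evenlen d.1)]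

end DS14

namespace DS14

/-- the set of indices where a good pair starts -/
noncomputable def goodFinset {n : ℕ} (p : Fin n → MStep) : Finset (Fin n) :=
  Finset.univ.filter
    (fun j : Fin n => ∃ h : (j : ℕ) + 1 < n, GoodPair (p j) (p ⟨(j : ℕ) + 1, h⟩))

lemma sOcc_eq_card {n : ℕ} (p : Fin n → MStep) : sOcc p = (goodFinset p).card := rfl

lemma getD_ofFn {α : Type} (d0 : α) {m : ℕ} (g : Fin m → α) (i : Fin m) :
    (List.ofFn g).getD i d0 = g i := by
  rw [List.getD_eq_getElem _ _ (by simp [i.isLt])]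
  simp

lemma get_eq_getD {α : Type} (d0 : α) (l : List α) (k : ℕ) (hk : k < l.length) :
    l.get ⟨k, hk⟩ = l.getD k d0 := by
  rw [List.get_eq_getElem, List.getD_eq_getElem _ _ hk]

def pathOf {m : ℕ} (v : List (MStep × Bool)) : Fin m → MStep :=
  fun i => (v.getD i (MStep.up, false)).1

noncomputable def marksOf (m : ℕ) (v : List (MStep × Bool)) : Finset (Fin m) :=
  Finset.univ.filter (fun i : Fin m => (v.getD i (MStep.up, false)).2 = true)

noncomputable def wOf {n : ℕ} (p : Fin n → MStep) (S : Finset (Fin n)) :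
    List (MStep × Bool) :=
  List.ofFn (fun i => (p i, decide (i ∈ S)))

lemma length_wOf {n : ℕ} (p : Fin n → MStep) (S : Finset (Fin n)) :
    (wOf p S).length = n := by simp [wOf]

lemma pathOf_wOf {n : ℕ} (p : Fin n → MStep) (S : Finset (Fin n)) :
    pathOf (wOf p S) = p := by
  funext i
  simp [pathOf, wOf, getD_ofFn]

lemma marksOf_wOf {n : ℕ} (p : Fin n → MStep) (S : Finset (Fin n)) :
    marksOf n (wOf p S) = S := by
  ext i
  simp [marksOf, wOf, getD_ofFn]

lemma wOf_pathOf_marksOf {m : ℕ} (v : List (MStep × Bool)) (h : v.length = m) :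
    wOf (pathOf (m := m) v) (marksOf m v) = v := by
  conv_rhs => rw [← ofFn_getD (MStep.up, false) m v h]
  unfold wOf pathOf marksOf
  congr 1
  funext i
  refine Prod.ext rfl ?_
  simp only [Finset.mem_filter, Finset.mem_univ, true_and]
  cases hb : (v.getD (i : ℕ) (MStep.up, false)).2 <;> simp [hb]

lemma map_fst_wOf {n : ℕ} (p : Fin n → MStep) (S : Finset (Fin n)) :
    (wOf p S).map Prod.fst = List.ofFn p := by
  rw [wOf, List.map_ofFn]
  rfl

lemma ofFn_pathOf {m : ℕ} (v : List (MStep × Bool)) (h : v.length = m) :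
    List.ofFn (pathOf (m := m) v) = v.map Prod.fst := by
  conv_rhs => rw [← wOf_pathOf_marksOf v h]
  rw [map_fst_wOf]

lemma countP_ofFn {m : ℕ} {α : Type} (g : Fin m → α) (pr : α → Bool) :
    (List.ofFn g).countP pr = ∑ i : Fin m, if pr (g i) then 1 else 0 := by
  induction m with
  | zero => simp
  | succ k ih =>
    rw [List.ofFn_succ, List.countP_cons, ih, Fin.sum_univ_succ]
    ring

lemma countP_wOf {n : ℕ} (p : Fin n → MStep) (S : Finset (Fin n)) :
    (wOf p S).countP (fun x => x.2) = S.card := by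
  rw [wOf, countP_ofFn]
  simp only [decide_eq_true_eq]
  rw [← Finset.card_filter]
  congr 1
  ext i
  simp

lemma card_marksOf {m : ℕ} (v : List (MStep × Bool)) (h : v.length = m) :
    (marksOf m v).card = v.countP (fun x => x.2) := by
  conv_rhs => rw [← wOf_pathOf_marksOf v h]
  rw [countP_wOf]

lemma marksGood_iff_getD (w : List (MStep × Bool)) :
    MarksGood w ↔ ∀ k : ℕ, k < w.length → (w.getD k (MStep.up, false)).2 = true →
      k + 1 < w.length ∧
        GoodPair (w.getD k (MStep.up, false)).1 (w.getD (k+1) (MStep.up, false)).1 := by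
  rw [marksGood_iff]
  constructor
  · intro H k hk hm
    obtain ⟨hk2, hg⟩ := H k hk (by rwa [get_eq_getD (MStep.up, false)])
    refine ⟨hk2, ?_⟩
    rwa [get_eq_getD (MStep.up, false), get_eq_getD (MStep.up, false)] at hg
  · intro H k hk hm
    obtain ⟨hk2, hg⟩ := H k hk (by rwa [← get_eq_getD (MStep.up, false)])
    refine ⟨hk2, ?_⟩
    rwa [get_eq_getD (MStep.up, false) _ _ hk, get_eq_getD (MStep.up, false) _ _ hk2]

lemma marksGood_iff_subset {m : ℕ} (v : List (MStep × Bool)) (h : v.length = m) :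
    MarksGood v ↔ marksOf m v ⊆ goodFinset (pathOf (m := m) v) := by
  rw [marksGood_iff_getD]
  constructor
  · intro H i hi
    simp only [marksOf, Finset.mem_filter, Finset.mem_univ, true_and] at hi
    obtain ⟨hk2, hg⟩ := H i (by omega) hi
    exact Finset.mem_filter.mpr ⟨Finset.mem_univ _, ⟨by omega, hg⟩⟩
  · intro H k hk hm
    have hkm : k < m := by omega
    have hi : (⟨k, hkm⟩ : Fin m) ∈ marksOf m v := by
      simp only [marksOf, Finset.mem_filter, Finset.mem_univ, true_and]
      exact hm
    obtain ⟨hk2, hg⟩ := (Finset.mem_filter.mp (H hi)).2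
    have hk2' : k + 1 < m := hk2
    exact ⟨by omega, hg⟩

lemma key_card (m j : ℕ) :
    (((Finset.univ.filter (fun p : Fin (m + j) → MStep => Valid p))).sigma
        (fun p => (goodFinset p).powersetCard j)).card
      = ((Finset.univ.filter (fun p : Fin m → MStep => Valid p))
          ×ˢ (Finset.univ : Finset (Fin m)).powersetCard j).card := by
  classical
  refine Finset.card_nbij'
    (fun x => (pathOf (F (wOf x.1 x.2)), marksOf m (F (wOf x.1 x.2))))
    (fun y => ⟨pathOf (E (wOf y.1 y.2)), marksOf (m + j) (E (wOf y.1 y.2))⟩)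
    ?_ ?_ ?_ ?_
  · -- forward maps into target
    rintro ⟨p, S⟩ hx
    rw [Finset.mem_coe, Finset.mem_sigma] at hx
    obtain ⟨hp, hS⟩ := hx
    rw [Finset.mem_filter] at hp
    rw [Finset.mem_powersetCard] at hS
    have hgood : MarksGood (wOf p S) := by
      rw [marksGood_iff_subset _ (length_wOf p S), pathOf_wOf, marksOf_wOf]
      exact hS.1
    have hlenw : (wOf p S).length = m + j := length_wOf p S
    have hcnt : (wOf p S).countP (fun x => x.2) = j := by
      rw [countP_wOf, hS.2]
    have hlenF : (F (wOf p S)).length = m := by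
      have := length_F (wOf p S) hgood
      omega
    rw [Finset.mem_coe, Finset.mem_product, Finset.mem_filter, Finset.mem_powersetCard]
    refine ⟨⟨Finset.mem_univ _, ?_⟩, Finset.subset_univ _, ?_⟩
    · rw [valid_iff_validL, ofFn_pathOf _ hlenF]
      show Ok 0 _
      rw [ok_F _ hgood]
      have := (valid_iff_validL p).mp hp.2
      rwa [ValidL, ← map_fst_wOf p S] at this
    · rw [card_marksOf _ hlenF, countP_F _ hgood, hcnt]
  · -- backward maps into source
    rintro ⟨q, T⟩ hy
    rw [Finset.mem_coe, Finset.mem_product, Finset.mem_filter, Finset.mem_powersetCard] at hy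
    obtain ⟨⟨-, hq⟩, -, hT⟩ := hy
    have hlenw : (wOf q T).length = m := length_wOf q T
    have hlenE : (E (wOf q T)).length = m + j := by
      rw [length_E, countP_wOf, hT, hlenw]
    rw [Finset.mem_coe, Finset.mem_sigma, Finset.mem_filter, Finset.mem_powersetCard]
    refine ⟨⟨Finset.mem_univ _, ?_⟩, ?_, ?_⟩
    · rw [valid_iff_validL, ofFn_pathOf _ hlenE]
      show Ok 0 _
      rw [ok_E]
      have := (valid_iff_validL q).mp hq
      rwa [ValidL, ← map_fst_wOf q T] at this
    · rw [← marksGood_iff_subset _ hlenE]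
      exact marksGood_E _
    · rw [card_marksOf _ hlenE, countP_E, countP_wOf, hT]
  · -- left inverse
    rintro ⟨p, S⟩ hx
    rw [Finset.mem_coe, Finset.mem_sigma] at hx
    obtain ⟨hp, hS⟩ := hx
    rw [Finset.mem_powersetCard] at hS
    have hgood : MarksGood (wOf p S) := by
      rw [marksGood_iff_subset _ (length_wOf p S), pathOf_wOf, marksOf_wOf]
      exact hS.1
    have hlenF : (F (wOf p S)).length = m := by
      have := length_F (wOf p S) hgood
      have hcnt : (wOf p S).countP (fun x => x.2) = j := by rw [countP_wOf, hS.2]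
      have := length_wOf p S
      omega
    dsimp only
    rw [wOf_pathOf_marksOf _ hlenF, E_F _ hgood, pathOf_wOf, marksOf_wOf]
  · -- right inverse
    rintro ⟨q, T⟩ hy
    rw [Finset.mem_coe, Finset.mem_product, Finset.mem_powersetCard] at hy
    obtain ⟨-, -, hT⟩ := hy
    have hlenE : (E (wOf q T)).length = m + j := by
      rw [length_E, countP_wOf, hT, length_wOf]
    dsimp only
    rw [wOf_pathOf_marksOf _ hlenE, F_E, pathOf_wOf, marksOf_wOf]

lemma key (n j : ℕ) (hj : j ≤ n) :
    ∑ p ∈ Finset.univ.filter (fun p : Fin n → MStep => Valid p), (sOcc p).choose j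
      = (n - j).choose j * catalan (n - j) := by
  classical
  obtain ⟨m, rfl⟩ : ∃ m, n = m + j := ⟨n - j, by omega⟩
  have hm : m + j - j = m := by omega
  rw [hm]
  have h1 : ∀ p : Fin (m + j) → MStep,
      (sOcc p).choose j = ((goodFinset p).powersetCard j).card := by
    intro p
    rw [Finset.card_powersetCard, sOcc_eq_card]
  calc ∑ p ∈ Finset.univ.filter (fun p : Fin (m+j) → MStep => Valid p), (sOcc p).choose j
      = ∑ p ∈ Finset.univ.filter (fun p : Fin (m+j) → MStep => Valid p),
          ((goodFinset p).powersetCard j).card := by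
        exact Finset.sum_congr rfl (fun p _ => h1 p)
    _ = (((Finset.univ.filter (fun p : Fin (m + j) → MStep => Valid p))).sigma
          (fun p => (goodFinset p).powersetCard j)).card := (Finset.card_sigma _ _).symm
    _ = ((Finset.univ.filter (fun p : Fin m → MStep => Valid p))
          ×ˢ (Finset.univ : Finset (Fin m)).powersetCard j).card := key_card m j
    _ = m.choose j * catalan m := by
        rw [Finset.card_product, card_valid, Finset.card_powersetCard, Finset.card_univ,
          Fintype.card_fin, mul_comm]

end DS14

namespace DS14

lemma sOcc_le (n : ℕ) (p : Fin n → MStep) : sOcc p ≤ n / 2 := by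
  rw [sOcc_eq_card]
  have h : (goodFinset p).card ≤ (Finset.range (n/2)).card := by
    refine Finset.card_le_card_of_injOn (fun i : Fin n => (i : ℕ) / 2) ?_ ?_
    · intro i hi
      simp only [Finset.mem_coe, goodFinset, Finset.mem_filter, Finset.mem_univ, true_and] at hi
      obtain ⟨h1, -⟩ := hi
      simp only [Finset.mem_coe, Finset.mem_range]
      omega
    · intro i hi i' hi' he
      simp only [goodFinset, Finset.coe_filter, Set.mem_setOf_eq] at hi hi'
      obtain ⟨-, h1, g1⟩ := hi
      obtain ⟨-, h2, g2⟩ := hi'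
      have he' : (i:ℕ)/2 = (i':ℕ)/2 := he
      by_contra hne
      have hne' : (i:ℕ) ≠ (i':ℕ) := fun hcc => hne (Fin.ext hcc)
      have hcase : (i':ℕ) = (i:ℕ)+1 ∨ (i:ℕ) = (i':ℕ)+1 := by omega
      rcases hcase with hc | hc
      · have hii : (⟨(i:ℕ)+1, h1⟩ : Fin n) = i' := Fin.ext hc.symm
        rw [hii] at g1
        exact goodPair_chain g1 g2
      · have hii : (⟨(i':ℕ)+1, h2⟩ : Fin n) = i := Fin.ext hc.symm
        rw [hii] at g2
        exact goodPair_chain g2 g1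
  simpa using h

end DS14


/-- Denise–Simion: `∑_{p ∈ M(n)} t^{s(p)} = ∑_j (-1)^j·(1-t)^j·binom(n-j,j)·C_{n-j}`. -/
theorem stmt14 (n : ℕ) :
    ∑ p ∈ Finset.univ.filter (fun p : Fin n → MStep => Valid p),
        (X : Polynomial ℤ) ^ sOcc p =
      ∑ j ∈ Finset.range (n / 2 + 1),
        (-1 : Polynomial ℤ) ^ j * (1 - X) ^ j *
          C (((n - j).choose j * catalan (n - j) : ℕ) : ℤ) := by
  classical
  have hXpow : ∀ s : ℕ, s ≤ n / 2 → (X : Polynomial ℤ)^s =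
      ∑ k ∈ Finset.range (n/2+1), (X-1)^k * (Nat.choose s k : Polynomial ℤ) := by
    intro s hs
    conv_lhs => rw [← sub_add_cancel (X : Polynomial ℤ) 1, add_pow]
    rw [Finset.sum_subset (Finset.range_subset_range.mpr (by omega : s+1 ≤ n/2+1))]
    · exact Finset.sum_congr rfl (fun k hk => by rw [one_pow, mul_one])
    · intro x hx hnx
      simp only [Finset.mem_range] at hx hnx
      have hlt : s < x := by omega
      rw [Nat.choose_eq_zero_of_lt hlt]
      simp
  calc ∑ p ∈ Finset.univ.filter (fun p : Fin n → MStep => Valid p),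
        (X : Polynomial ℤ) ^ sOcc p
      = ∑ p ∈ Finset.univ.filter (fun p : Fin n → MStep => Valid p),
          ∑ k ∈ Finset.range (n/2+1), (X-1)^k * (Nat.choose (sOcc p) k : Polynomial ℤ) :=
        Finset.sum_congr rfl (fun p _ => hXpow (sOcc p) (DS14.sOcc_le n p))
    _ = ∑ k ∈ Finset.range (n/2+1),
          ∑ p ∈ Finset.univ.filter (fun p : Fin n → MStep => Valid p),
            (X-1)^k * (Nat.choose (sOcc p) k : Polynomial ℤ) := Finset.sum_comm
    _ = ∑ k ∈ Finset.range (n/2+1),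
          (X-1)^k * (((n - k).choose k * catalan (n - k) : ℕ) : Polynomial ℤ) := by
        refine Finset.sum_congr rfl (fun k hk => ?_)
        rw [← Finset.mul_sum, ← Nat.cast_sum]
        congr 2
        refine DS14.key n k ?_
        simp only [Finset.mem_range] at hk
        exact le_trans (by omega) (Nat.div_le_self n 2)
    _ = ∑ j ∈ Finset.range (n / 2 + 1),
          (-1 : Polynomial ℤ) ^ j * (1 - X) ^ j *
            C (((n - j).choose j * catalan (n - j) : ℕ) : ℤ) := by
        refine Finset.sum_congr rfl (fun k hk => ?_)
        rw [← mul_pow, neg_one_mul, neg_sub, Polynomial.C_eq_natCast]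
end
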